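/- Let x = (x_1,...,x_5) be a position of the exact (5,2) nim with x_1 ≤ ... ≤ x_5, and let x̂ = (x_1,x_2,x_3,x_4) be its reduced position. If every column sum of the Bouton matrix of x̂ is 0 mod 3 (i.e., x̂ is a Moore nim(4,≤2) P-position), then no move in the exact (5,2) nim from x leads to a position y whose reduced position ŷ also has all column sums 0 mod 3, unless the pile of maximum size is changed by the move. -/

import Mathlib

/-- The `j`-th binary digit of `m`. -/
def digit (m j : ℕ) : ℕ := m / 2 ^ j % 2

/-- The `j`-th column sum of the Bouton matrix of a position. -/
def colSum {n : ℕ} (x : Fin n → ℕ) (j : ℕ) : ℕ := ∑ i, digit (x i) j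

/-- A move of classical nim: strictly reduce exactly one pile. -/
def NimMove {n : ℕ} (x y : Fin n → ℕ) : Prop :=
  ∃ i, y i < x i ∧ ∀ j, j ≠ i → y j = x j

/-- A move of Moore's nim(n, ≤k): strictly reduce at least one and at most `k` piles. -/
def MooreMove (k : ℕ) {n : ℕ} (x y : Fin n → ℕ) : Prop :=
  ∃ S : Finset (Fin n), S.Nonempty ∧ S.card ≤ k ∧ (∀ i ∈ S, y i < x i) ∧ ∀ i ∉ S, y i = x i

/-- A move of exact (n, k) nim: strictly reduce exactly `k` piles. -/
def ExactMove (k : ℕ) {n : ℕ} (x y : Fin n → ℕ) : Prop :=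
  ∃ S : Finset (Fin n), S.card = k ∧ (∀ i ∈ S, y i < x i) ∧ ∀ i ∉ S, y i = x i

/-- N-positions of an impartial game: there is a move to a position all of whose
moves lead to N-positions (i.e. a move to a P-position). -/
inductive NPos {α : Type*} (Move : α → α → Prop) : α → Prop where
  | intro {x y : α} (h : Move x y) (hy : ∀ z, Move y z → NPos Move z) : NPos Move x

/-- P-positions of an impartial game: every move leads to an N-position
(in particular, terminal positions are P-positions). -/
def PPos {α : Type*} (Move : α → α → Prop) (x : α) : Prop :=
  ∀ y, Move x y → NPos Move y

lemma digit_eq_testBit (m j : ℕ) : digit m j = if m.testBit j then 1 else 0 := by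
  unfold digit
  rcases Nat.mod_two_eq_zero_or_one (m / 2 ^ j) with h | h <;>
    simp [Nat.testBit_eq_decide_div_mod_eq, h]

lemma digit_le_one (m j : ℕ) : digit m j ≤ 1 := by
  unfold digit; omega

/-- Highest differing bit of `b < a`: `a` has `1`, `b` has `0`. -/
lemma high_bit {a b : ℕ} (h : b < a) :
    ∃ j, digit a j = 1 ∧ digit b j = 0 ∧ ∀ k, j < k → digit a k = digit b k := by
  have hne : a ^^^ b ≠ 0 := fun hz => absurd (Nat.eq_of_testBit_eq (fun i => by have := congrArg (Nat.testBit · i) hz; simpa [Nat.testBit_xor] using this)) h.ne'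
  obtain ⟨j, hj, hjmax⟩ := Nat.exists_most_significant_bit hne
  rw [Nat.testBit_xor] at hj
  have hhigh : ∀ k, j < k → a.testBit k = b.testBit k := by
    intro k hk
    have hk' := hjmax k hk
    rw [Nat.testBit_xor] at hk'
    revert hk'
    cases a.testBit k <;> cases b.testBit k <;> simp
  have hab : a.testBit j = true ∧ b.testBit j = false := by
    cases ha : a.testBit j <;> cases hb : b.testBit j
    · rw [ha, hb] at hj; simp at hj
    · exact absurd (Nat.lt_of_testBit j ha hb hhigh) (by omega)
    · exact ⟨rfl, rfl⟩
    · rw [ha, hb] at hj; simp at hj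
  refine ⟨j, ?_, ?_, fun k hk => ?_⟩
  · rw [digit_eq_testBit, hab.1]; rfl
  · rw [digit_eq_testBit, hab.2]; rfl
  · rw [digit_eq_testBit, digit_eq_testBit, hhigh k hk]

/-- Core combinatorial lemma: a balanced 4-tuple cannot stay balanced after
strictly reducing exactly two coordinates. -/
lemma key (a b : Fin 4 → ℕ) (i1 i2 : Fin 4) (h12 : i1 ≠ i2)
    (h1 : b i1 < a i1) (h2 : b i2 < a i2)
    (heq : ∀ i, i ≠ i1 → i ≠ i2 → b i = a i)
    (hba : ∀ j, colSum a j % 3 = 0) (hbb : ∀ j, colSum b j % 3 = 0) : False := by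
  have col_eq : ∀ j, digit (a i1) j + digit (a i2) j
      = digit (b i1) j + digit (b i2) j := by
    intro j
    have ha := hba j
    have hb := hbb j
    simp only [colSum, Fin.sum_univ_four] at ha hb
    have d0a := digit_le_one (a 0) j; have d1a := digit_le_one (a 1) j
    have d2a := digit_le_one (a 2) j; have d3a := digit_le_one (a 3) j
    have d0b := digit_le_one (b 0) j; have d1b := digit_le_one (b 1) j
    have d2b := digit_le_one (b 2) j; have d3b := digit_le_one (b 3) j
    fin_cases i1 <;> fin_cases i2 <;> simp_all <;> omega
  obtain ⟨j1, ha1, hb1, hm1⟩ := high_bit h1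
  obtain ⟨j2, ha2, hb2, hm2⟩ := high_bit h2
  -- at j1, coordinate i2 must also differ, so j2 ≥ j1 (else contradict hm2)
  have hc1 := col_eq j1
  have hc2 := col_eq j2
  have da2 := digit_le_one (a i2) j1
  have db2 := digit_le_one (b i2) j1
  have da1 := digit_le_one (a i1) j2
  have db1 := digit_le_one (b i1) j2
  have hle1 : ¬ j2 < j1 := fun h => by have := hm2 j1 h; omega
  have hle2 : ¬ j1 < j2 := fun h => by have := hm1 j2 h; omega
  have : j1 = j2 := by omega
  subst this
  omega

theorem exact52_move_changes_leader (x y : Fin 5 → ℕ) (hx : Monotone x)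
    (hbx : ∀ j, colSum (fun i : Fin 4 => x i.castSucc) j % 3 = 0)
    (hmv : ExactMove 2 x y)
    (hby : ∀ j, colSum (fun i : Fin 4 => y i.castSucc) j % 3 = 0) :
    y 4 ≠ x 4 := by
  intro hy4
  obtain ⟨S, hcard, hlt, hout⟩ := hmv
  obtain ⟨i1, i2, h12, rfl⟩ := Finset.card_eq_two.mp hcard
  have h1 : y i1 < x i1 := hlt i1 (by simp)
  have h2 : y i2 < x i2 := hlt i2 (by simp)
  have hi1 : (i1 : ℕ) < 4 := by
    by_contra h
    have hl := i1.isLt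
    have : i1 = 4 := Fin.ext (by rw [show ((4 : Fin 5) : ℕ) = 4 from rfl]; omega)
    rw [this, hy4] at h1; omega
  have hi2 : (i2 : ℕ) < 4 := by
    by_contra h
    have hl := i2.isLt
    have : i2 = 4 := Fin.ext (by rw [show ((4 : Fin 5) : ℕ) = 4 from rfl]; omega)
    rw [this, hy4] at h2; omega
  set k1 : Fin 4 := ⟨(i1 : ℕ), hi1⟩
  set k2 : Fin 4 := ⟨(i2 : ℕ), hi2⟩
  have hc1 : k1.castSucc = i1 := Fin.ext rfl
  have hc2 : k2.castSucc = i2 := Fin.ext rfl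
  refine key (fun i => x i.castSucc) (fun i => y i.castSucc) k1 k2
    (fun h => h12 (by rw [← hc1, ← hc2, h])) (by simpa [hc1] using h1)
    (by simpa [hc2] using h2) ?_ hbx hby
  intro i hne1 hne2
  refine hout i.castSucc ?_
  simp only [Finset.mem_insert, Finset.mem_singleton]
  rintro (h | h)
  · exact hne1 (Fin.castSucc_injective _ (by rw [← hc1] at h; exact h))
  · exact hne2 (Fin.castSucc_injective _ (by rw [← hc2] at h; exact h))
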